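/- Let V_n = Σ_{i=1}^n c_i c_i' p_i(1-p_i) be positive definite and ψ(θ) = Σ_{i=1}^n log(1+p_i(e^{θ'c_i}-1)). Then the Hessian H_ψ(θ) satisfies, for all θ with ‖θ‖ ≤ r and L = max_i ‖c_i‖: e^{-rL} V_n ≼ H_ψ(θ) ≼ e^{rL} V_n in the Loewner order. -/

import Mathlib

open Real RealInnerProductSpace Finset


lemma psd_smul_vmv {d : ℕ} (a : ℝ) (ha : 0 ≤ a) (v : Fin d → ℝ) :
    (a • Matrix.vecMulVec v v).PosSemidef := by
  refine Matrix.PosSemidef.of_dotProduct_mulVec_nonneg ?_ ?_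
  · ext i j
    simp [Matrix.conjTranspose_apply, Matrix.vecMulVec_apply, mul_comm]
  · intro x
    have h : dotProduct (star x) ((a • Matrix.vecMulVec v v).mulVec x)
        = a * (∑ i, v i * x i) ^ 2 := by
      have hmv : (Matrix.vecMulVec v v).mulVec x = fun j => v j * (∑ i, v i * x i) := by
        ext j
        simp [Matrix.mulVec, Matrix.vecMulVec_apply, dotProduct, Finset.mul_sum, mul_assoc]
      rw [Matrix.smul_mulVec, dotProduct_smul, hmv, smul_eq_mul]
      congr 1
      simp only [dotProduct, star_trivial]
      rw [sq, Finset.sum_mul]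
      exact Finset.sum_congr rfl fun j _ => by ring
    rw [h]
    positivity

lemma scalar_bounds (p y B : ℝ) (hp0 : 0 < p) (hp1 : p < 1) (hB : |y| ≤ B) :
    Real.exp (-B) ≤ Real.exp y / (1 + p * (Real.exp y - 1)) ^ 2 ∧
    Real.exp y / (1 + p * (Real.exp y - 1)) ^ 2 ≤ Real.exp B := by
  set q := 1 + p * (Real.exp y - 1) with hq
  have hey : 0 < Real.exp y := Real.exp_pos y
  have hq0 : 0 < q := by nlinarith
  have h1 : Real.exp y ≤ Real.exp B := Real.exp_le_exp.2 (le_trans (le_abs_self y) hB)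
  have h2 : Real.exp (-y) ≤ Real.exp B := Real.exp_le_exp.2 (le_trans (neg_le_abs y) hB)
  have h3 : Real.exp (-B) ≤ Real.exp y := Real.exp_le_exp.2 (by linarith [neg_abs_le y])
  have h4 : Real.exp (-B) ≤ Real.exp (-y) := Real.exp_le_exp.2 (by linarith [le_abs_self y])
  have hmul : Real.exp (-y) * Real.exp y = 1 := by rw [← Real.exp_add]; simp
  constructor
  · rw [le_div_iff₀ (by positivity)]
    rcases le_or_gt 1 (Real.exp y) with h | h
    · have hqle : q ≤ Real.exp y := by nlinarith
      nlinarith [mul_le_mul h4 (mul_le_mul hqle hqle hq0.le hey.le) (by positivity : (0:ℝ) ≤ q * q) (Real.exp_pos (-y)).le]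
    · have hqle : q ≤ 1 := by nlinarith
      have hq2 : q ^ 2 ≤ 1 := by nlinarith
      nlinarith [mul_le_of_le_one_right (Real.exp_pos (-B)).le hq2]
  · rw [div_le_iff₀ (by positivity)]
    rcases le_or_gt 1 (Real.exp y) with h | h
    · have hqge : 1 ≤ q := by nlinarith
      have hq2 : 1 ≤ q ^ 2 := by nlinarith
      nlinarith [le_mul_of_one_le_right (Real.exp_pos B).le hq2]
    · have hqge : Real.exp y ≤ q := by nlinarith
      nlinarith [mul_le_mul h2 (mul_le_mul hqge hqge hey.le hq0.le) (by positivity : (0:ℝ) ≤ Real.exp y * Real.exp y) (Real.exp_pos B).le, hmul]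


lemma psd_sum {d : ℕ} {ι : Type*} (s : Finset ι) (f : ι → Matrix (Fin d) (Fin d) ℝ)
    (h : ∀ i ∈ s, (f i).PosSemidef) : (∑ i ∈ s, f i).PosSemidef := by
  classical
  induction s using Finset.induction_on with
  | empty => simpa using Matrix.PosSemidef.zero
  | insert x s hx ih =>
    rw [Finset.sum_insert hx]
    exact (h _ (Finset.mem_insert_self _ _)).add
      (ih fun i hi => h i (Finset.mem_insert_of_mem hi))

/-- Loewner bounds on the Hessian of `ψ`:
`e^{-rL} V_n ≼ H_ψ(θ) ≼ e^{rL} V_n` for `‖θ‖ ≤ r`. -/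
theorem hessian_loewner_bounds {d n : ℕ}
    (p : Fin n → ℝ) (c : Fin n → EuclideanSpace ℝ (Fin d))
    (hp : ∀ i, p i ∈ Set.Ioo (0:ℝ) 1)
    (V : Matrix (Fin d) (Fin d) ℝ)
    (hV : V = ∑ i, (p i * (1 - p i)) •
      Matrix.vecMulVec (fun j => c i j) (fun j => c i j))
    (hVpd : V.PosDef)
    (H : EuclideanSpace ℝ (Fin d) → Matrix (Fin d) (Fin d) ℝ)
    (hH : ∀ θ, H θ = ∑ i,
      (p i * (1 - p i) * Real.exp ⟪θ, c i⟫
        / (1 + p i * (Real.exp ⟪θ, c i⟫ - 1)) ^ 2) •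
      Matrix.vecMulVec (fun j => c i j) (fun j => c i j))
    (L : ℝ) (hL : IsGreatest (Set.range fun i => ‖c i‖) L)
    (r : ℝ) (hr : 0 ≤ r) :
    ∀ θ : EuclideanSpace ℝ (Fin d), ‖θ‖ ≤ r →
      (H θ - Real.exp (-(r * L)) • V).PosSemidef ∧
      (Real.exp (r * L) • V - H θ).PosSemidef := by
  intro θ hθ
  obtain ⟨i0, hi0⟩ := hL.1
  have hL0 : 0 ≤ L := hi0 ▸ norm_nonneg (c i0)
  have hyB : ∀ i, |⟪θ, c i⟫| ≤ r * L := fun i =>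
    le_trans (abs_real_inner_le_norm θ (c i))
      (mul_le_mul hθ (hL.2 ⟨i, rfl⟩) (norm_nonneg _) hr)
  have key := fun i => scalar_bounds (p i) ⟪θ, c i⟫ (r * L) (hp i).1 (hp i).2 (hyB i)
  have hb : ∀ i, 0 < p i * (1 - p i) := fun i => by nlinarith [(hp i).1, (hp i).2]
  constructor
  · rw [hH, hV, Finset.smul_sum, ← Finset.sum_sub_distrib]
    refine psd_sum _ _ fun i _ => ?_
    rw [smul_smul, ← sub_smul]
    refine psd_smul_vmv _ ?_ _
    rw [sub_nonneg]
    calc Real.exp (-(r * L)) * (p i * (1 - p i))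
        ≤ (Real.exp ⟪θ, c i⟫ / (1 + p i * (Real.exp ⟪θ, c i⟫ - 1)) ^ 2)
            * (p i * (1 - p i)) :=
          mul_le_mul_of_nonneg_right (key i).1 (hb i).le
      _ = p i * (1 - p i) * Real.exp ⟪θ, c i⟫
            / (1 + p i * (Real.exp ⟪θ, c i⟫ - 1)) ^ 2 := by ring
  · rw [hH, hV, Finset.smul_sum, ← Finset.sum_sub_distrib]
    refine psd_sum _ _ fun i _ => ?_
    rw [smul_smul, ← sub_smul]
    refine psd_smul_vmv _ ?_ _
    rw [sub_nonneg]
    calc p i * (1 - p i) * Real.exp ⟪θ, c i⟫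
            / (1 + p i * (Real.exp ⟪θ, c i⟫ - 1)) ^ 2
        = (Real.exp ⟪θ, c i⟫ / (1 + p i * (Real.exp ⟪θ, c i⟫ - 1)) ^ 2)
            * (p i * (1 - p i)) := by ring
      _ ≤ Real.exp (r * L) * (p i * (1 - p i)) :=
          mul_le_mul_of_nonneg_right (key i).2 (hb i).le
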